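/- arXiv:2311.14261 — 12 statements merged into one kernel-verified Lean document; each statement's English description precedes it below -/
import Mathlib

section
/- Let L be a dcpo and let 𝒜 be a Scott closed subset of the complete lattice H(L) of all Scott closed subsets of L (ordered by inclusion). Then the union ⋃𝒜 is a Scott closed subset of L. -/
universe u

/-- A subset is Scott open: an upper set inaccessible by directed suprema. -/
def ScottOpen {α : Type u} [Preorder α] (U : Set α) : Prop :=
  IsUpperSet U ∧ ∀ d : Set α, d.Nonempty → DirectedOn (· ≤ ·) d →
    ∀ a : α, IsLUB d a → a ∈ U → (d ∩ U).Nonempty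

/-- A subset is Scott closed: a lower set closed under directed suprema. -/
def ScottClosed {α : Type u} [Preorder α] (C : Set α) : Prop :=
  IsLowerSet C ∧ ∀ d : Set α, d ⊆ C → d.Nonempty → DirectedOn (· ≤ ·) d →
    ∀ a : α, IsLUB d a → a ∈ C

/-- A dcpo: every nonempty directed subset has a supremum. -/
def IsDcpo (α : Type u) [Preorder α] : Prop :=
  ∀ d : Set α, d.Nonempty → DirectedOn (· ≤ ·) d → ∃ a, IsLUB d a

/-- Compactness with respect to the Scott topology. -/
def ScottCompact {α : Type u} [Preorder α] (K : Set α) : Prop :=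
  ∀ 𝒰 : Set (Set α), (∀ U ∈ 𝒰, ScottOpen U) → K ⊆ ⋃₀ 𝒰 →
    ∃ F : Set (Set α), F ⊆ 𝒰 ∧ F.Finite ∧ K ⊆ ⋃₀ F

/-- Well-filteredness of the Scott topology of a poset. -/
def WellFiltered (α : Type u) [Preorder α] : Prop :=
  ∀ 𝒞 : Set (Set α), 𝒞.Nonempty →
    (∀ K ∈ 𝒞, ScottCompact K ∧ IsUpperSet K) →
    DirectedOn (fun A B : Set α => B ⊆ A) 𝒞 →
    ∀ U : Set α, ScottOpen U → ⋂₀ 𝒞 ⊆ U → ∃ K ∈ 𝒞, K ⊆ U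

/-- The Hoare power construction: Scott closed subsets ordered by inclusion. -/
structure HPoset (α : Type u) [Preorder α] where
  carrier : Set α
  closed' : ScottClosed carrier

instance {α : Type u} [Preorder α] : PartialOrder (HPoset α) where
  le A B := A.carrier ⊆ B.carrier
  le_refl _ := subset_rfl
  le_trans _ _ _ h h' := Set.Subset.trans h h'
  le_antisymm A B h h' := by
    cases A; cases B
    simp only [HPoset.mk.injEq]
    exact subset_antisymm h h'

/-- The Smyth power construction: nonempty Scott compact saturated subsets
ordered by reverse inclusion. -/
structure QPoset (α : Type u) [Preorder α] where
  carrier : Set α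
  nonempty' : carrier.Nonempty
  compact' : ScottCompact carrier
  upper' : IsUpperSet carrier

instance {α : Type u} [Preorder α] : PartialOrder (QPoset α) where
  le K K' := K'.carrier ⊆ K.carrier
  le_refl _ := subset_rfl
  le_trans _ _ _ h h' := Set.Subset.trans h' h
  le_antisymm K K' h h' := by
    cases K; cases K'
    simp only [QPoset.mk.injEq]
    exact subset_antisymm h' h

/-- The lattice of Scott open subsets ordered by inclusion. -/
structure OpenSet (α : Type u) [Preorder α] where
  carrier : Set α
  open' : ScottOpen carrier

instance {α : Type u} [Preorder α] : PartialOrder (OpenSet α) where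
  le A B := A.carrier ⊆ B.carrier
  le_refl _ := subset_rfl
  le_trans _ _ _ h h' := Set.Subset.trans h h'
  le_antisymm A B h h' := by
    cases A; cases B
    simp only [OpenSet.mk.injEq]
    exact subset_antisymm h h'

theorem hoare_union_scottClosed {L : Type u} [PartialOrder L] (hL : IsDcpo L)
    (𝒜 : Set (HPoset L)) (h𝒜 : ScottClosed 𝒜) :
    ScottClosed (⋃ A ∈ 𝒜, A.carrier) := by
  constructor
  · intro u v hvu hu
    obtain ⟨A, hA, huA⟩ := Set.mem_iUnion₂.1 hu
    exact Set.mem_iUnion₂.2 ⟨A, hA, A.closed'.1 hvu huA⟩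
  · intro d hd hdne hdir a ha
    -- Each principal ideal ↓x is Scott closed
    have hIic : ∀ x : L, ScottClosed (Set.Iic x) :=
      fun x => ⟨fun u v h hu => le_trans h hu,
        fun e he _ _ b hb => hb.2 (fun y hy => he hy)⟩
    -- For x ∈ d, the principal ideal belongs to 𝒜 (𝒜 is a lower set)
    have hmem : ∀ x ∈ d, (⟨Set.Iic x, hIic x⟩ : HPoset L) ∈ 𝒜 := by
      intro x hx
      obtain ⟨A, hA, hxA⟩ := Set.mem_iUnion₂.1 (hd hx)
      exact h𝒜.1 (show Set.Iic x ⊆ A.carrier from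
        fun y hy => A.closed'.1 hy hxA) hA
    -- The Scott closure of d
    set S : Set (Set L) := {E | ScottClosed E ∧ d ⊆ E} with hS
    set C : Set L := ⋂₀ S with hCdef
    have hdC : d ⊆ C := fun x hx => Set.mem_sInter.2 fun E hE => hE.2 hx
    have hC : ScottClosed C := by
      constructor
      · intro u v hvu hu
        exact Set.mem_sInter.2 fun E hE => hE.1.1 hvu (Set.mem_sInter.1 hu E hE)
      · intro e he hene hedir b hb
        exact Set.mem_sInter.2 fun E hE =>
          hE.1.2 e (fun y hy => Set.mem_sInter.1 (he hy) E hE) hene hedir b hb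
    -- The directed family of principal ideals in HPoset
    set D : Set (HPoset L) := (fun x => (⟨Set.Iic x, hIic x⟩ : HPoset L)) '' d with hDdef
    have hDsub : D ⊆ 𝒜 := by
      rintro P ⟨x, hx, rfl⟩
      exact hmem x hx
    have hDne : D.Nonempty := hdne.image _
    have hDdir : DirectedOn (· ≤ ·) D := by
      rintro P ⟨x, hx, rfl⟩ Q ⟨y, hy, rfl⟩
      obtain ⟨z, hz, hxz, hyz⟩ := hdir x hx y hy
      exact ⟨⟨Set.Iic z, hIic z⟩, ⟨z, hz, rfl⟩,
        fun u hu => le_trans hu hxz, fun u hu => le_trans hu hyz⟩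
    -- C (as an element of HPoset) is the LUB of D
    have hlub : IsLUB D (⟨C, hC⟩ : HPoset L) := by
      constructor
      · rintro P ⟨x, hx, rfl⟩
        exact fun y hy => hC.1 hy (hdC hx)
      · intro B hB
        have hdB : d ⊆ B.carrier := fun x hx => hB ⟨x, hx, rfl⟩ (le_refl x)
        exact Set.sInter_subset_of_mem (show B.carrier ∈ S from ⟨B.closed', hdB⟩)
    have hCmem : (⟨C, hC⟩ : HPoset L) ∈ 𝒜 := h𝒜.2 D hDsub hDne hDdir _ hlub
    have haC : a ∈ C := hC.2 d hdC hdne hdir a ha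
    exact Set.mem_iUnion₂.2 ⟨⟨C, hC⟩, hCmem, haC⟩
end

section
/- Let L be a well-filtered dcpo and let 𝒦 be a Scott compact saturated subset of Q(L), where Q(L) is the poset of all nonempty Scott compact saturated subsets of L ordered by reverse inclusion. Then ⋃𝒦 is a compact saturated subset of L with respect to the Scott topology. -/
universe u

lemma scottOpen_sUnion {α : Type u} [Preorder α] {S : Set (Set α)}
    (h : ∀ U ∈ S, ScottOpen U) : ScottOpen (⋃₀ S) := by
  constructor
  · intro a b hab ha
    obtain ⟨U, hU, haU⟩ := ha
    exact ⟨U, hU, (h U hU).1 hab haU⟩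
  · intro d hd hdir a hlub ha
    obtain ⟨U, hU, haU⟩ := ha
    obtain ⟨x, hxd, hxU⟩ := (h U hU).2 d hd hdir a hlub haU
    exact ⟨x, hxd, U, hU, hxU⟩

lemma wf_inter {L : Type u} [PartialOrder L] (hw : WellFiltered L)
    (𝒞 : Set (Set L)) (hne : 𝒞.Nonempty)
    (hK : ∀ K ∈ 𝒞, ScottCompact K ∧ IsUpperSet K ∧ K.Nonempty)
    (hdir : DirectedOn (fun A B : Set L => B ⊆ A) 𝒞) :
    (⋂₀ 𝒞).Nonempty ∧ ScottCompact (⋂₀ 𝒞) ∧ IsUpperSet (⋂₀ 𝒞) := by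
  have hupper : IsUpperSet (⋂₀ 𝒞) := fun a b hab ha C hC => (hK C hC).2.1 hab (ha C hC)
  have hcomp : ScottCompact (⋂₀ 𝒞) := by
    intro 𝒰 h𝒰 hcov
    have hop : ScottOpen (⋃₀ 𝒰) := scottOpen_sUnion h𝒰
    obtain ⟨K, hK𝒞, hKU⟩ := hw 𝒞 hne (fun K h => ⟨(hK K h).1, (hK K h).2.1⟩) hdir _ hop hcov
    obtain ⟨F, hF𝒰, hFfin, hKF⟩ := (hK K hK𝒞).1 𝒰 h𝒰 hKU
    exact ⟨F, hF𝒰, hFfin, (Set.sInter_subset_of_mem hK𝒞).trans hKF⟩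
  refine ⟨?_, hcomp, hupper⟩
  by_contra h
  rw [Set.not_nonempty_iff_eq_empty] at h
  have hemp : ScottOpen (∅ : Set L) :=
    ⟨fun _ _ _ hx => hx, fun d _ _ a _ ha => absurd ha (by simp)⟩
  obtain ⟨K, hK𝒞, hKe⟩ := hw 𝒞 hne (fun K h' => ⟨(hK K h').1, (hK K h').2.1⟩) hdir ∅ hemp
    (by rw [h])
  exact (hK K hK𝒞).2.2.ne_empty (Set.subset_empty_iff.mp hKe)

lemma box_open {L : Type u} [PartialOrder L] (hw : WellFiltered L)
    {U : Set L} (hU : ScottOpen U) :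
    ScottOpen {K : QPoset L | K.carrier ⊆ U} := by
  constructor
  · intro K K' hle hK
    exact Set.Subset.trans hle hK
  · intro d hdne hdir a hlub ha
    have hne : (QPoset.carrier '' d).Nonempty := hdne.image _
    have hmem : ∀ C ∈ QPoset.carrier '' d,
        ScottCompact C ∧ IsUpperSet C ∧ C.Nonempty := by
      rintro C ⟨K, hK, rfl⟩; exact ⟨K.compact', K.upper', K.nonempty'⟩
    have hdir' : DirectedOn (fun A B : Set L => B ⊆ A) (QPoset.carrier '' d) := by
      rintro _ ⟨K, hK, rfl⟩ _ ⟨K', hK', rfl⟩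
      obtain ⟨K'', hK'', h1, h2⟩ := hdir K hK K' hK'
      exact ⟨K''.carrier, ⟨K'', hK'', rfl⟩, h1, h2⟩
    obtain ⟨hin, hic, hiu⟩ := wf_inter hw _ hne hmem hdir'
    have hub : (⟨⋂₀ (QPoset.carrier '' d), hin, hic, hiu⟩ : QPoset L) ∈ upperBounds d :=
      fun K hK => Set.sInter_subset_of_mem ⟨K, hK, rfl⟩
    have haJ : a ≤ ⟨⋂₀ (QPoset.carrier '' d), hin, hic, hiu⟩ := hlub.2 hub
    have hsub : ⋂₀ (QPoset.carrier '' d) ⊆ U := Set.Subset.trans haJ ha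
    obtain ⟨C, hC, hCU⟩ := hw _ hne (fun C h => ⟨(hmem C h).1, (hmem C h).2.1⟩) hdir' U hU hsub
    obtain ⟨K, hKd, rfl⟩ := hC
    exact ⟨K, hKd, hCU⟩

theorem smyth_union_compact_saturated {L : Type u} [PartialOrder L]
    (hd : IsDcpo L) (hw : WellFiltered L)
    (𝒦 : Set (QPoset L)) (hc : ScottCompact 𝒦) (hu : IsUpperSet 𝒦) :
    ScottCompact (⋃ K ∈ 𝒦, K.carrier) ∧ IsUpperSet (⋃ K ∈ 𝒦, K.carrier) := by
  constructor
  · intro 𝒰 h𝒰 hcov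
    have hcovK : ∀ K, K ∈ 𝒦 → ∃ F : Set (Set L), F ⊆ 𝒰 ∧ F.Finite ∧ K.carrier ⊆ ⋃₀ F :=
      fun K hK => K.compact' 𝒰 h𝒰 (fun x hx => hcov (Set.mem_biUnion hK hx))
    choose F hF1 hF2 hF3 using hcovK
    set 𝒱 : Set (Set (QPoset L)) :=
      {V | ∃ K, ∃ hK : K ∈ 𝒦, V = {K' : QPoset L | K'.carrier ⊆ ⋃₀ F K hK}} with h𝒱
    have h𝒱open : ∀ V ∈ 𝒱, ScottOpen V := by
      rintro _ ⟨K, hK, rfl⟩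
      exact box_open hw (scottOpen_sUnion (fun U hU => h𝒰 U (hF1 K hK hU)))
    have hcov' : 𝒦 ⊆ ⋃₀ 𝒱 := fun K hK => ⟨_, ⟨K, hK, rfl⟩, hF3 K hK⟩
    obtain ⟨G, hG𝒱, hGfin, hKG⟩ := hc 𝒱 h𝒱open hcov'
    choose k hk hVeq using fun V (hV : V ∈ G) => hG𝒱 hV
    refine ⟨⋃ V, ⋃ hV : V ∈ G, F (k V hV) (hk V hV), ?_, ?_, ?_⟩
    · intro U hU
      simp only [Set.mem_iUnion] at hU
      obtain ⟨V, hV, hUF⟩ := hU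
      exact hF1 _ _ hUF
    · exact Set.Finite.biUnion' hGfin (fun V hV => hF2 _ _)
    · intro x hx
      simp only [Set.mem_iUnion] at hx
      obtain ⟨K, hK, hxK⟩ := hx
      obtain ⟨V, hVG, hKV⟩ := hKG hK
      have hKsub : K.carrier ⊆ ⋃₀ F (k V hVG) (hk V hVG) := by
        have := hVeq V hVG
        rw [this] at hKV
        exact hKV
      obtain ⟨U, hUF, hxU⟩ := hKsub hxK
      exact ⟨U, by simp only [Set.mem_iUnion]; exact ⟨V, hVG, hUF⟩, hxU⟩
  · intro a b hab ha
    simp only [Set.mem_iUnion] at ha ⊢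
    obtain ⟨K, hK, haK⟩ := ha
    exact ⟨K, hK, K.upper' hab haK⟩
end

section
/- Let L be a well-filtered dcpo, M a complete lattice, and f : L → M a Scott-continuous map. Then there is a unique map f̂ : H(L) → M preserving arbitrary suprema such that f̂(↓x) = f(x) for all x ∈ L; explicitly, f̂(A) = sup f(A) for each Scott closed set A. -/
universe u

section HoareAux
variable {L : Type u} {M : Type u} [PartialOrder L] [CompleteLattice M]

lemma scottClosed_Iic (x : L) : ScottClosed (Set.Iic x) :=
  ⟨fun _ b hba ha => le_trans hba ha,
   fun d hd _ _ _ ha => ha.2 fun _ hy => hd hy⟩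

lemma scottClosed_sublevel {f : L → M} (hf : ScottContinuous f) (m : M) :
    ScottClosed {x | f x ≤ m} :=
  ⟨fun _ b hba ha => le_trans (hf.monotone hba) ha,
   fun d hd hne hdir a ha => by
     have h := hf hne hdir ha
     exact h.2 fun y hy => by
       obtain ⟨x, hx, rfl⟩ := hy
       exact hd hx⟩

lemma hoare_key (f : L → M) (hf : ScottContinuous f) (fhat : HPoset L → M)
    (h1 : ∀ (S : Set (HPoset L)) (a : HPoset L), IsLUB S a → fhat a = sSup (fhat '' S))
    (h2 : ∀ (x : L) (A : HPoset L), A.carrier = Set.Iic x → fhat A = f x)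
    (A : HPoset L) : fhat A = sSup (f '' A.carrier) := by
  set S : Set (HPoset L) := {B | ∃ a ∈ A.carrier, B.carrier = Set.Iic a} with hS
  have hlub : IsLUB S A := by
    constructor
    · rintro B ⟨a, ha, hB⟩
      show B.carrier ⊆ A.carrier
      rw [hB]
      exact fun y hy => A.closed'.1 hy ha
    · intro B hB
      show A.carrier ⊆ B.carrier
      intro x hx
      have : (⟨Set.Iic x, scottClosed_Iic x⟩ : HPoset L) ∈ S := ⟨x, hx, rfl⟩
      exact hB this le_rfl
  rw [h1 S A hlub]
  congr 1
  ext m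
  constructor
  · rintro ⟨B, ⟨a, ha, hB⟩, rfl⟩
    exact ⟨a, ha, (h2 a B hB).symm⟩
  · rintro ⟨a, ha, rfl⟩
    exact ⟨⟨Set.Iic a, scottClosed_Iic a⟩, ⟨a, ha, rfl⟩, h2 a _ rfl⟩

end HoareAux

theorem hoare_universal_property {L : Type u} {M : Type u} [PartialOrder L]
    [CompleteLattice M] (hd : IsDcpo L) (hw : WellFiltered L)
    (f : L → M) (hf : ScottContinuous f) :
    (∃! fhat : HPoset L → M,
      (∀ (S : Set (HPoset L)) (a : HPoset L), IsLUB S a → fhat a = sSup (fhat '' S)) ∧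
      (∀ (x : L) (A : HPoset L), A.carrier = Set.Iic x → fhat A = f x)) ∧
    (∀ fhat : HPoset L → M,
      ((∀ (S : Set (HPoset L)) (a : HPoset L), IsLUB S a → fhat a = sSup (fhat '' S)) ∧
       (∀ (x : L) (A : HPoset L), A.carrier = Set.Iic x → fhat A = f x)) →
      ∀ A : HPoset L, fhat A = sSup (f '' A.carrier)) := by
  set g : HPoset L → M := fun A => sSup (f '' A.carrier) with hg
  have hp2 : ∀ (x : L) (A : HPoset L), A.carrier = Set.Iic x → g A = f x := by
    intro x A hA
    simp only [hg, hA]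
    apply le_antisymm
    · exact sSup_le (by rintro y ⟨z, hz, rfl⟩; exact hf.monotone hz)
    · exact le_sSup ⟨x, le_refl x, rfl⟩
  have hp1 : ∀ (S : Set (HPoset L)) (a : HPoset L), IsLUB S a → g a = sSup (g '' S) := by
    intro S a hlub
    apply le_antisymm
    · set m := sSup (g '' S) with hm
      set B : HPoset L := ⟨{x | f x ≤ m}, scottClosed_sublevel hf m⟩ with hB
      have hub : B ∈ upperBounds S := by
        intro s hs
        show s.carrier ⊆ B.carrier
        intro x hx
        have : f x ≤ g s := le_sSup ⟨x, hx, rfl⟩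
        exact le_trans this (le_sSup ⟨s, hs, rfl⟩)
      have haB : a.carrier ⊆ B.carrier := hlub.2 hub
      exact sSup_le (by rintro y ⟨z, hz, rfl⟩; exact haB hz)
    · apply sSup_le
      rintro y ⟨s, hs, rfl⟩
      exact sSup_le_sSup (Set.image_mono (f := f) (hlub.1 hs))
  refine ⟨⟨g, ⟨hp1, hp2⟩, ?_⟩, fun fhat ⟨h1, h2⟩ => hoare_key f hf fhat h1 h2⟩
  intro fhat ⟨h1, h2⟩
  funext A
  exact hoare_key f hf fhat h1 h2 A
end

section
/- In a well-filtered coherent T0 space, the intersection of any nonempty family of compact saturated subsets is compact saturated. -/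
universe u

/-- A saturated subset: an intersection of open sets. -/
def SaturatedSet {X : Type u} [TopologicalSpace X] (K : Set X) : Prop :=
  K = ⋂₀ {U : Set X | IsOpen U ∧ K ⊆ U}

/-- A well-filtered topological space. -/
def WellFilteredSpace (X : Type u) [TopologicalSpace X] : Prop :=
  ∀ 𝒞 : Set (Set X), 𝒞.Nonempty →
    (∀ K ∈ 𝒞, IsCompact K ∧ SaturatedSet K) →
    DirectedOn (fun A B : Set X => B ⊆ A) 𝒞 →
    ∀ U : Set X, IsOpen U → ⋂₀ 𝒞 ⊆ U → ∃ K ∈ 𝒞, K ⊆ U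

/-- A coherent space: binary intersections of compact saturated sets are compact. -/
def CoherentTopSpace (X : Type u) [TopologicalSpace X] : Prop :=
  ∀ K₁ K₂ : Set X, IsCompact K₁ → SaturatedSet K₁ → IsCompact K₂ → SaturatedSet K₂ →
    IsCompact (K₁ ∩ K₂)

lemma sat_sInter_aux {X : Type u} [TopologicalSpace X] (𝒮 : Set (Set X))
    (h : ∀ K ∈ 𝒮, SaturatedSet K) : SaturatedSet (⋂₀ 𝒮) := by
  apply subset_antisymm
  · intro x hx U hU
    exact hU.2 hx
  · intro x hx K hK
    have hKsat := h K hK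
    rw [hKsat]
    intro U hU
    exact hx U ⟨hU.1, fun y hy => hU.2 (hy K hK)⟩

lemma finInter_compact_aux {X : Type u} [TopologicalSpace X]
    (hcoh : CoherentTopSpace X) (F : Set (Set X)) (hfin : F.Finite) :
    F.Nonempty → (∀ K ∈ F, IsCompact K ∧ SaturatedSet K) → IsCompact (⋂₀ F) := by
  refine Set.Finite.induction_on F hfin ?_ ?_
  · intro hne _; exact absurd rfl hne.ne_empty
  · intro K F' hKF' hfin' ih _ hall
    rcases F'.eq_empty_or_nonempty with rfl | hF'ne
    · simpa using (hall K (Set.mem_insert _ _)).1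
    · rw [Set.sInter_insert]
      have h1 := hall K (Set.mem_insert _ _)
      have h2 : ∀ L ∈ F', IsCompact L ∧ SaturatedSet L :=
        fun L hL => hall L (Set.mem_insert_of_mem _ hL)
      exact hcoh K (⋂₀ F') h1.1 h1.2 (ih hF'ne h2)
        (sat_sInter_aux F' fun L hL => (h2 L hL).2)

theorem wf_coherent_sInter_compact_saturated {X : Type u} [TopologicalSpace X]
    [T0Space X] (hw : WellFilteredSpace X) (hcoh : CoherentTopSpace X)
    (𝒮 : Set (Set X)) (hne : 𝒮.Nonempty)
    (h : ∀ K ∈ 𝒮, IsCompact K ∧ SaturatedSet K) :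
    IsCompact (⋂₀ 𝒮) ∧ SaturatedSet (⋂₀ 𝒮) := by
  have hsat : SaturatedSet (⋂₀ 𝒮) := sat_sInter_aux 𝒮 fun K hK => (h K hK).2
  refine ⟨?_, hsat⟩
  -- family of finite nonempty intersections
  set 𝒞 : Set (Set X) := {A | ∃ F : Set (Set X), F ⊆ 𝒮 ∧ F.Finite ∧ F.Nonempty ∧ A = ⋂₀ F}
    with h𝒞
  have h𝒞mem : ∀ A ∈ 𝒞, IsCompact A ∧ SaturatedSet A := by
    rintro A ⟨F, hF𝒮, hFfin, hFne, rfl⟩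
    exact ⟨finInter_compact_aux hcoh F hFfin hFne (fun K hK => h K (hF𝒮 hK)),
      sat_sInter_aux F fun K hK => (h K (hF𝒮 hK)).2⟩
  have h𝒞ne : 𝒞.Nonempty := by
    obtain ⟨K, hK⟩ := hne
    exact ⟨K, {K}, by simpa using hK, Set.finite_singleton K, ⟨K, rfl⟩, by simp⟩
  have h𝒞dir : DirectedOn (fun A B : Set X => B ⊆ A) 𝒞 := by
    rintro A ⟨F, hF𝒮, hFfin, hFne, rfl⟩ B ⟨G, hG𝒮, hGfin, hGne, rfl⟩
    refine ⟨⋂₀ (F ∪ G), ⟨F ∪ G, Set.union_subset hF𝒮 hG𝒮, hFfin.union hGfin,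
      hFne.mono Set.subset_union_left, rfl⟩, ?_, ?_⟩
    · exact Set.sInter_subset_sInter Set.subset_union_left
    · exact Set.sInter_subset_sInter Set.subset_union_right
  have hInter : ⋂₀ 𝒞 = ⋂₀ 𝒮 := by
    apply subset_antisymm
    · intro x hx K hK
      have : K ∈ 𝒞 := ⟨{K}, by simpa using hK, Set.finite_singleton K, ⟨K, rfl⟩, by simp⟩
      simpa using hx K this
    · intro x hx A hA
      obtain ⟨F, hF𝒮, _, _, rfl⟩ := hA
      exact fun K hK => hx K (hF𝒮 hK)
  apply isCompact_of_finite_subcover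
  intro ι U hUopen hcover
  have : ⋂₀ 𝒞 ⊆ ⋃ i, U i := hInter ▸ hcover
  obtain ⟨K, hK𝒞, hKsub⟩ := hw 𝒞 h𝒞ne h𝒞mem h𝒞dir (⋃ i, U i) (isOpen_iUnion hUopen) this
  obtain ⟨t, ht⟩ := (h𝒞mem K hK𝒞).1.elim_finite_subcover U hUopen hKsub
  exact ⟨t, fun x hx => ht (by rw [← hInter] at hx; exact hx K hK𝒞)⟩
end

section
/- Let P be a consonant poset. Then for every open subset 𝒰 of σ(P) in the Scott topology of the lattice σ(P) of Scott open sets, and for every family of the form { V ∈ σ(P) : V ∩ A ≠ ∅ for all A ∈ 𝒦 } where 𝒦 is a compact saturated subset of Γ(P) with the Scott topology, this family is Scott open in σ(P). -/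
universe u

/-- A consonant poset. -/
def ConsonantPoset (P : Type u) [Preorder P] : Prop :=
  ∀ 𝒰 : Set (OpenSet P), ScottOpen 𝒰 → ∀ U ∈ 𝒰,
    ∃ K : Set P, ScottCompact K ∧ IsUpperSet K ∧
      K ⊆ U.carrier ∧ {V : OpenSet P | K ⊆ V.carrier} ⊆ 𝒰

/-- A finite nonempty subset of a directed set has an upper bound in the set. -/
lemma directedOn_finite_exists_ub {α : Type u} [Preorder α] {d G : Set α}
    (hd : DirectedOn (· ≤ ·) d) (hG : G ⊆ d) (hfin : G.Finite) (hne : G.Nonempty) :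
    ∃ b ∈ d, ∀ x ∈ G, x ≤ b := by
  refine Set.Finite.induction_on (motive := fun G _ =>
    G ⊆ d → G.Nonempty → ∃ b ∈ d, ∀ x ∈ G, x ≤ b) G hfin ?_ ?_ hG hne
  · exact fun _ h => absurd h (by simp)
  · intro a s _ _ ih hsub _
    have had : a ∈ d := hsub (Set.mem_insert _ _)
    rcases s.eq_empty_or_nonempty with rfl | hsne
    · exact ⟨a, had, by simp⟩
    · obtain ⟨b, hbd, hb⟩ := ih (fun x hx => hsub (Set.mem_insert_of_mem _ hx)) hsne
      obtain ⟨c, hcd, hac, hbc⟩ := hd a had b hbd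
      exact ⟨c, hcd, fun x hx => by
        rcases hx with rfl | hx
        · exact hac
        · exact (hb x hx).trans hbc⟩

/-- The complement of a Scott open set is Scott closed. -/
lemma scottOpen_compl {α : Type u} [Preorder α] {W : Set α} (hW : ScottOpen W) :
    ScottClosed Wᶜ := by
  refine ⟨hW.1.compl, fun dd hsub hne hdir a ha hmem => ?_⟩
  obtain ⟨x, hx, hxW⟩ := hW.2 dd hne hdir a ha hmem
  exact hsub hx hxW

/-- The "diamond" of a Scott open set is Scott open in the Hoare powerdomain. -/
lemma diamond_scottOpen {P : Type u} [PartialOrder P] (W : OpenSet P) :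
    ScottOpen {A : HPoset P | (W.carrier ∩ A.carrier).Nonempty} := by
  constructor
  · intro A B hAB ⟨x, hxW, hxA⟩
    exact ⟨x, hxW, hAB hxA⟩
  · intro dd hne hdir A hA ⟨x, hxW, hxA⟩
    by_contra h
    have hub : ∀ C ∈ dd, C.carrier ⊆ W.carrierᶜ := by
      intro C hC y hy hyW
      exact h ⟨C, hC, ⟨y, hyW, hy⟩⟩
    have : A ≤ ⟨W.carrierᶜ, scottOpen_compl W.open'⟩ :=
      hA.2 (fun C hC => hub C hC)
    exact this hxA hxW

theorem consonant_triangle_inter_scottOpen {P : Type u} [PartialOrder P]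
    (hcons : ConsonantPoset P)
    (𝒦 : Set (HPoset P)) (hc : ScottCompact 𝒦) (hu : IsUpperSet 𝒦) :
    ScottOpen {V : OpenSet P | ∀ A ∈ 𝒦, (V.carrier ∩ A.carrier).Nonempty} := by
  constructor
  · -- upper set
    intro V V' hVV' hV A hA
    obtain ⟨x, hxV, hxA⟩ := hV A hA
    exact ⟨x, hVV' hxV, hxA⟩
  · intro d hdne hdir V hV hVmem
    rcases 𝒦.eq_empty_or_nonempty with rfl | h𝒦ne
    · obtain ⟨W, hW⟩ := hdne
      exact ⟨W, hW, by simp⟩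
    -- V.carrier ⊆ union of carriers of d
    have hUopen : ScottOpen (⋃ W ∈ d, W.carrier) := by
      constructor
      · intro x y hxy hx
        simp only [Set.mem_iUnion] at hx ⊢
        obtain ⟨W, hWd, hxW⟩ := hx
        exact ⟨W, hWd, W.open'.1 hxy hxW⟩
      · intro dd hne hdd a ha hmem
        simp only [Set.mem_iUnion] at hmem
        obtain ⟨W, hWd, haW⟩ := hmem
        obtain ⟨x, hx, hxW⟩ := W.open'.2 dd hne hdd a ha haW
        exact ⟨x, hx, Set.mem_iUnion₂.2 ⟨W, hWd, hxW⟩⟩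
    have hVsub : V.carrier ⊆ ⋃ W ∈ d, W.carrier := by
      have : V ≤ ⟨_, hUopen⟩ :=
        hV.2 (fun W hW x hx => Set.mem_iUnion₂.2 ⟨W, hW, hx⟩)
      exact this
    -- cover 𝒦 by diamonds
    set f : OpenSet P → Set (HPoset P) :=
      fun W => {A : HPoset P | (W.carrier ∩ A.carrier).Nonempty} with hf
    have hcover : 𝒦 ⊆ ⋃₀ (f '' d) := by
      intro A hA
      obtain ⟨x, hxV, hxA⟩ := hVmem A hA
      obtain ⟨W, hWd, hxW⟩ := Set.mem_iUnion₂.1 (hVsub hxV)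
      exact ⟨f W, ⟨W, hWd, rfl⟩, ⟨x, hxW, hxA⟩⟩
    obtain ⟨F, hFsub, hFfin, hFcov⟩ := hc (f '' d)
      (by rintro _ ⟨W, _, rfl⟩; exact diamond_scottOpen W) hcover
    choose g hgd hgf using fun S : {S // S ∈ F} => hFsub S.2
    have : Finite {S // S ∈ F} := hFfin.to_subtype
    have hGfin : (Set.range g).Finite := Set.finite_range g
    have hGsub : Set.range g ⊆ d := by rintro _ ⟨S, rfl⟩; exact hgd S
    have hGne : (Set.range g).Nonempty := by
      obtain ⟨A, hA⟩ := h𝒦ne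
      obtain ⟨S, hSF, _⟩ := hFcov hA
      exact ⟨g ⟨S, hSF⟩, ⟨S, hSF⟩, rfl⟩
    obtain ⟨b, hbd, hb⟩ := directedOn_finite_exists_ub hdir hGsub hGfin hGne
    refine ⟨b, hbd, ?_⟩
    intro A hA
    obtain ⟨S, hSF, hAS⟩ := hFcov hA
    have hAfS : A ∈ f (g ⟨S, hSF⟩) := by rw [hgf ⟨S, hSF⟩]; exact hAS
    obtain ⟨x, hxW, hxA⟩ := hAfS
    exact ⟨x, hb _ ⟨⟨S, hSF⟩, rfl⟩ hxW, hxA⟩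
end

section
/- Every consonant poset has property (KC): for every Scott compact saturated subset 𝒦 of Γ(P) (with the Scott topology on Γ(P)) and every Scott open U ⊆ P that meets every member of 𝒦, there exists a Scott compact saturated subset K ⊆ U that still meets every member of 𝒦. -/
universe u

lemma scottOpen_compl_of_closed {α : Type u} [Preorder α] {C : Set α}
    (hC : ScottClosed C) : ScottOpen Cᶜ := by
  refine ⟨hC.1.compl, fun d hdne hdir a hlub ha => ?_⟩
  rcases Set.not_subset.mp (fun hsub => ha (hC.2 d hsub hdne hdir a hlub)) with ⟨x, hx, hx'⟩
  exact ⟨x, hx, hx'⟩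

lemma scottClosed_compl_of_open {α : Type u} [Preorder α] {V : Set α}
    (hV : ScottOpen V) : ScottClosed Vᶜ := by
  refine ⟨hV.1.compl, fun d hsub hdne hdir a hlub ha => ?_⟩
  exact absurd (hV.2 d hdne hdir a hlub ha)
    (by rintro ⟨x, hx, hx'⟩; exact hsub hx hx')

lemma directedOn_finite_bound {α : Type u} [Preorder α] {d : Set α}
    (hdne : d.Nonempty) (hdir : DirectedOn (· ≤ ·) d) {s : Set α}
    (hs : s.Finite) (hsd : s ⊆ d) : ∃ b ∈ d, ∀ x ∈ s, x ≤ b := by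
  revert hsd
  refine Set.Finite.induction_on (motive := fun s _ => s ⊆ d → ∃ b ∈ d, ∀ x ∈ s, x ≤ b) s hs ?_ ?_
  · intro _; exact hdne.imp fun b hb => ⟨hb, by simp⟩
  · intro a s ha hsfin ih hins
    rw [Set.insert_subset_iff] at hins
    obtain ⟨b, hb, hball⟩ := ih hins.2
    obtain ⟨c, hc, hac, hbc⟩ := hdir a hins.1 b hb
    exact ⟨c, hc, fun x hx => (Set.mem_insert_iff.mp hx).elim
      (fun h => h ▸ hac) (fun h => (hball x h).trans hbc)⟩

theorem consonant_implies_KC {P : Type u} [PartialOrder P] (hcons : ConsonantPoset P)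
    (𝒦 : Set (HPoset P)) (hc : ScottCompact 𝒦) (hu : IsUpperSet 𝒦)
    (U : Set P) (hU : ScottOpen U) (hmeet : ∀ A ∈ 𝒦, (U ∩ A.carrier).Nonempty) :
    ∃ K : Set P, ScottCompact K ∧ IsUpperSet K ∧ K ⊆ U ∧
      ∀ A ∈ 𝒦, (K ∩ A.carrier).Nonempty := by
  classical
  set 𝒰 : Set (OpenSet P) := {V | ∀ A ∈ 𝒦, (V.carrier ∩ A.carrier).Nonempty} with h𝒰def
  have h𝒰open : ScottOpen 𝒰 := by
    constructor
    · intro V W hVW hV A hA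
      obtain ⟨x, hx1, hx2⟩ := hV A hA
      exact ⟨x, hVW hx1, hx2⟩
    · intro d hdne hdir V₀ hlub hV₀
      -- cover 𝒦 by the open families 𝒱 V for V ∈ d
      set 𝒱 : OpenSet P → Set (HPoset P) :=
        fun V => {B | (V.carrier ∩ B.carrier).Nonempty} with h𝒱def
      have h𝒱open : ∀ V, ScottOpen (𝒱 V) := by
        intro V
        constructor
        · intro B B' hBB' hB
          obtain ⟨x, hx1, hx2⟩ := hB
          exact ⟨x, hx1, hBB' hx2⟩
        · intro d' hd'ne hd'dir A hlub' hA
          by_contra hempty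
          rw [Set.not_nonempty_iff_eq_empty] at hempty
          have hub : (⟨(V.carrier)ᶜ, scottClosed_compl_of_open V.open'⟩ : HPoset P)
              ∈ upperBounds d' := by
            intro B hB x hx
            intro hxV
            have : B ∈ d' ∩ 𝒱 V := ⟨hB, ⟨x, hxV, hx⟩⟩
            simp [hempty] at this
          have hAsub : A.carrier ⊆ (V.carrier)ᶜ := hlub'.2 hub
          obtain ⟨x, hx1, hx2⟩ := hA
          exact hAsub hx2 hx1
      have hcover : 𝒦 ⊆ ⋃₀ (𝒱 '' d) := by
        intro A hA
        by_contra hnot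
        have hall : ∀ V ∈ d, (V.carrier ∩ A.carrier) = ∅ := by
          intro V hV
          rw [Set.eq_empty_iff_forall_notMem]
          intro x hx
          exact hnot ⟨𝒱 V, ⟨V, hV, rfl⟩, ⟨x, hx.1, hx.2⟩⟩
        have hub : (⟨(A.carrier)ᶜ, scottOpen_compl_of_closed A.closed'⟩ : OpenSet P)
            ∈ upperBounds d := by
          intro V hV x hx hxA
          have : x ∈ V.carrier ∩ A.carrier := ⟨hx, hxA⟩
          simp [hall V hV] at this
        have hsub : V₀.carrier ⊆ (A.carrier)ᶜ := hlub.2 hub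
        obtain ⟨x, hx1, hx2⟩ := hV₀ A hA
        exact hsub hx1 hx2
      obtain ⟨F, hF𝒰, hFfin, hFcov⟩ := hc (𝒱 '' d)
        (by rintro _ ⟨V, _, rfl⟩; exact h𝒱open V) hcover
      -- choose for each S ∈ F a witness V ∈ d
      have hchoice : ∀ S ∈ F, ∃ V ∈ d, 𝒱 V = S := fun S hS => by
        obtain ⟨V, hV, rfl⟩ := hF𝒰 hS; exact ⟨V, hV, rfl⟩
      have : Nonempty (OpenSet P) :=
        ⟨⟨∅, ⟨fun _ _ _ h => h, fun d _ _ a _ ha => absurd ha (Set.notMem_empty a)⟩⟩⟩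
      choose! w hw hweq using hchoice
      have hsfin : (w '' F).Finite := Set.Finite.image w hFfin
      have hsd : w '' F ⊆ d := by rintro _ ⟨S, hS, rfl⟩; exact hw S hS
      obtain ⟨V', hV'd, hV'ub⟩ := directedOn_finite_bound hdne hdir hsfin hsd
      refine ⟨V', hV'd, ?_⟩
      intro A hA
      obtain ⟨S, hSF, hAS⟩ := hFcov hA
      have h1 : A ∈ 𝒱 (w S) := by rw [hweq S hSF]; exact hAS
      obtain ⟨x, hx1, hx2⟩ := h1
      exact ⟨x, hV'ub (w S) ⟨S, hSF, rfl⟩ hx1, hx2⟩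
  have hUmem : (⟨U, hU⟩ : OpenSet P) ∈ 𝒰 := fun A hA => hmeet A hA
  obtain ⟨K, hKc, hKu, hKU, hΦ⟩ := hcons 𝒰 h𝒰open ⟨U, hU⟩ hUmem
  refine ⟨K, hKc, hKu, hKU, ?_⟩
  intro A hA
  by_contra hempty
  rw [Set.not_nonempty_iff_eq_empty] at hempty
  have hKsub : K ⊆ (A.carrier)ᶜ := by
    intro x hx hxA
    have : x ∈ K ∩ A.carrier := ⟨hx, hxA⟩
    simp [hempty] at this
  have hmem : (⟨(A.carrier)ᶜ, scottOpen_compl_of_closed A.closed'⟩ : OpenSet P) ∈ 𝒰 :=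
    hΦ hKsub
  obtain ⟨x, hx1, hx2⟩ := hmem A hA
  exact hx1 hx2
end

section
/- A T0 topological space X is consonant if and only if it has property (KC): for every compact saturated subset 𝒦 of (Γ(X), lower Vietoris topology) and every open U ⊆ X meeting all members of 𝒦, there is a compact saturated K ⊆ U meeting all members of 𝒦. -/
universe u

/-- The lower Vietoris topology on the closed subsets of a space. -/
def lowerVietoris (X : Type u) [TopologicalSpace X] :
    TopologicalSpace (TopologicalSpace.Closeds X) :=
  TopologicalSpace.generateFrom
    {S | ∃ U : Set X, IsOpen U ∧
      S = {C : TopologicalSpace.Closeds X | ((C : Set X) ∩ U).Nonempty}}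

/-- A consonant topological space. -/
def ConsonantSpace (X : Type u) [TopologicalSpace X] : Prop :=
  ∀ 𝒰 : Set (TopologicalSpace.Opens X), ScottOpen 𝒰 → ∀ U ∈ 𝒰,
    ∃ K : Set X, IsCompact K ∧ SaturatedSet K ∧
      K ⊆ (U : Set X) ∧ {V : TopologicalSpace.Opens X | K ⊆ (V : Set X)} ⊆ 𝒰

section Aux

open TopologicalSpace Set

variable {X : Type u} [TopologicalSpace X]

/-- The subbasic open "diamond" sets of the lower Vietoris topology. -/
lemma isOpen_dia {U : Set X} (hU : IsOpen U) :
    @IsOpen _ (lowerVietoris X) {C : Closeds X | ((C : Set X) ∩ U).Nonempty} :=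
  TopologicalSpace.isOpen_generateFrom_of_mem ⟨U, hU, rfl⟩

end Aux

theorem consonant_iff_KC (X : Type u) [TopologicalSpace X] [T0Space X] :
    ConsonantSpace X ↔
    (∀ 𝒦 : Set (TopologicalSpace.Closeds X),
      @IsCompact _ (lowerVietoris X) 𝒦 →
      (𝒦 = ⋂₀ {𝒰 : Set (TopologicalSpace.Closeds X) |
        @IsOpen _ (lowerVietoris X) 𝒰 ∧ 𝒦 ⊆ 𝒰}) →
      ∀ U : Set X, IsOpen U → (∀ A ∈ 𝒦, (U ∩ (A : Set X)).Nonempty) →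
      ∃ K : Set X, IsCompact K ∧ SaturatedSet K ∧ K ⊆ U ∧
        ∀ A ∈ 𝒦, (K ∩ (A : Set X)).Nonempty) := by
  classical
  letI : TopologicalSpace (TopologicalSpace.Closeds X) := lowerVietoris X
  constructor
  · -- consonant → (KC)
    intro hcons 𝒦 hcomp _hsat U hU hmeet
    set 𝒰₀ : Set (TopologicalSpace.Opens X) :=
      {V | ∀ A ∈ 𝒦, ((A : Set X) ∩ (V : Set X)).Nonempty} with h𝒰₀
    have hscott : ScottOpen 𝒰₀ := by
      constructor
      · intro V W hVW hV A hA
        exact (hV A hA).mono (Set.inter_subset_inter_right _ hVW)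
      · intro d hdne hdir s hs hsU
        have hs' : (s : Set X) = ⋃ V ∈ d, (V : Set X) := by
          rw [← hs.sSup_eq]; exact TopologicalSpace.Opens.coe_sSup
        have hcover : 𝒦 ⊆ ⋃ V : d, {C : TopologicalSpace.Closeds X |
            ((C : Set X) ∩ ((V : TopologicalSpace.Opens X) : Set X)).Nonempty} := by
          intro A hA
          obtain ⟨x, hxA, hxs⟩ := hsU A hA
          rw [hs'] at hxs
          simp only [Set.mem_iUnion] at hxs
          obtain ⟨V, hVd, hxV⟩ := hxs
          exact Set.mem_iUnion.mpr ⟨⟨V, hVd⟩, ⟨x, hxA, hxV⟩⟩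
        obtain ⟨t, ht⟩ := hcomp.elim_finite_subcover _
          (fun V : d => isOpen_dia (V : TopologicalSpace.Opens X).2) hcover
        obtain ⟨W, hWd, hW⟩ := Finset.sup_le_of_le_directed d hdne hdir
          (t.image Subtype.val) (fun V hV => by
            simp only [Finset.mem_image] at hV
            obtain ⟨⟨V', hV'd⟩, _, rfl⟩ := hV
            exact ⟨V', hV'd, le_rfl⟩)
        refine ⟨W, hWd, ?_⟩
        intro A hA
        have := ht hA
        simp only [Set.mem_iUnion] at this
        obtain ⟨V, hVt, hAV⟩ := this
        have hVW : (V : TopologicalSpace.Opens X) ≤ W := by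
          refine le_trans ?_ hW
          have : (V : TopologicalSpace.Opens X) ∈ t.image Subtype.val :=
            Finset.mem_image.mpr ⟨V, hVt, rfl⟩
          simpa using Finset.le_sup (f := id) this
        exact hAV.mono (Set.inter_subset_inter_right _ hVW)
    have hU𝒰₀ : (⟨U, hU⟩ : TopologicalSpace.Opens X) ∈ 𝒰₀ := by
      intro A hA
      obtain ⟨x, hx1, hx2⟩ := hmeet A hA
      exact ⟨x, hx2, hx1⟩
    obtain ⟨K, hKc, hKsat, hKU, hKΦ⟩ := hcons 𝒰₀ hscott _ hU𝒰₀
    refine ⟨K, hKc, hKsat, hKU, ?_⟩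
    intro A hA
    by_contra hKA
    rw [Set.not_nonempty_iff_eq_empty] at hKA
    have hKAc : K ⊆ (A : Set X)ᶜ := fun x hx hxA =>
      Set.eq_empty_iff_forall_notMem.mp hKA x ⟨hx, hxA⟩
    have hV : (⟨(A : Set X)ᶜ, A.2.isOpen_compl⟩ : TopologicalSpace.Opens X) ∈ 𝒰₀ :=
      hKΦ hKAc
    obtain ⟨x, hx1, hx2⟩ := hV A hA
    exact hx2 hx1
  · -- (KC) → consonant
    intro hKC 𝒰 hscott U hU
    set 𝒦 : Set (TopologicalSpace.Closeds X) :=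
      {A | (⟨(A : Set X)ᶜ, A.2.isOpen_compl⟩ : TopologicalSpace.Opens X) ∉ 𝒰}
      with h𝒦
    -- every member of 𝒰 meets every member of 𝒦
    have h𝒦sub : ∀ V : TopologicalSpace.Opens X, V ∈ 𝒰 →
        ∀ A ∈ 𝒦, ((A : Set X) ∩ (V : Set X)).Nonempty := by
      intro V hV A hA
      by_contra hAV
      rw [Set.not_nonempty_iff_eq_empty] at hAV
      have hle : V ≤ ⟨(A : Set X)ᶜ, A.2.isOpen_compl⟩ := by
        intro x hx
        intro hxA
        exact Set.eq_empty_iff_forall_notMem.mp hAV x ⟨hxA, hx⟩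
      exact hA (hscott.1 hle hV)
    -- 𝒦 is compact in the lower Vietoris topology
    have hcomp : IsCompact 𝒦 := by
      rw [isCompact_iff_ultrafilter_le_nhds]
      intro f hf
      rw [Filter.le_principal_iff] at hf
      set A0 : Set X := {x | ∀ V : Set X, IsOpen V → x ∈ V →
        {C : TopologicalSpace.Closeds X | ((C : Set X) ∩ V).Nonempty} ∈ f} with hA0
      have hA0closed : IsClosed A0 := by
        rw [← isOpen_compl_iff, isOpen_iff_forall_mem_open]
        intro x hx
        simp only [hA0, Set.mem_compl_iff, Set.mem_setOf_eq, not_forall] at hx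
        obtain ⟨V, hVo, hxV, hVf⟩ := hx
        exact ⟨V, fun y hy hyA => hVf (hyA V hVo hy), hVo, hxV⟩
      set A : TopologicalSpace.Closeds X := ⟨A0, hA0closed⟩ with hAdef
      have hconv : (f : Filter _) ≤ nhds A := by
        show (f : Filter _) ≤ @nhds _ (lowerVietoris X) A
        rw [lowerVietoris, TopologicalSpace.nhds_generateFrom]
        refine le_iInf₂ ?_
        rintro s ⟨hAs, V, hVo, rfl⟩
        rw [Filter.le_principal_iff]
        obtain ⟨x, hxA, hxV⟩ := hAs
        exact hxA V hVo hxV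
      have hA𝒦 : A ∈ 𝒦 := by
        by_contra hA𝒰
        have hA𝒰 : (⟨(A : Set X)ᶜ, A.2.isOpen_compl⟩ : TopologicalSpace.Opens X) ∈ 𝒰 :=
          not_not.mp hA𝒰
        set d : Set (TopologicalSpace.Opens X) := {V |
          {C : TopologicalSpace.Closeds X | ((C : Set X) ∩ (V : Set X)).Nonempty} ∉ f}
          with hd
        have hdne : d.Nonempty := by
          refine ⟨⊥, ?_⟩
          simp only [hd, Set.mem_setOf_eq]
          have : {C : TopologicalSpace.Closeds X |
              ((C : Set X) ∩ ((⊥ : TopologicalSpace.Opens X) : Set X)).Nonempty} = ∅ := by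
            ext C
            simp
          rw [this]
          exact Filter.empty_notMem _
        have hdir : DirectedOn (· ≤ ·) d := by
          intro V hV W hW
          refine ⟨V ⊔ W, ?_, le_sup_left, le_sup_right⟩
          simp only [hd, Set.mem_setOf_eq] at hV hW ⊢
          have heq : {C : TopologicalSpace.Closeds X |
              ((C : Set X) ∩ ((V ⊔ W : TopologicalSpace.Opens X) : Set X)).Nonempty} =
              {C : TopologicalSpace.Closeds X | ((C : Set X) ∩ (V : Set X)).Nonempty} ∪
              {C : TopologicalSpace.Closeds X | ((C : Set X) ∩ (W : Set X)).Nonempty} := by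
            ext C
            simp only [Set.mem_setOf_eq, Set.mem_union, TopologicalSpace.Opens.coe_sup,
              Set.inter_union_distrib_left, Set.union_nonempty]
          rw [heq]
          intro h
          rcases Ultrafilter.union_mem_iff.mp h with h | h
          · exact hV h
          · exact hW h
        have hlub : IsLUB d ⟨(A : Set X)ᶜ, A.2.isOpen_compl⟩ := by
          constructor
          · intro V hV x hxV hxA
            exact hV (hxA (V : Set X) V.2 hxV)
          · intro W hW x hx
            have hx' : ¬ ∀ V : Set X, IsOpen V → x ∈ V →
                {C : TopologicalSpace.Closeds X | ((C : Set X) ∩ V).Nonempty} ∈ f := hx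
            push_neg at hx'
            obtain ⟨V, hVo, hxV, hVf⟩ := hx'
            exact hW (a := ⟨V, hVo⟩) hVf hxV
        obtain ⟨V, hVd, hV𝒰⟩ := hscott.2 d hdne hdir _ hlub hA𝒰
        apply hVd
        exact Filter.mem_of_superset hf (fun B hB => h𝒦sub V hV𝒰 B hB)
      exact ⟨A, hA𝒦, hconv⟩
    -- 𝒦 is saturated
    have hsat : 𝒦 = ⋂₀ {𝒲 : Set (TopologicalSpace.Closeds X) |
        @IsOpen _ (lowerVietoris X) 𝒲 ∧ 𝒦 ⊆ 𝒲} := by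
      apply subset_antisymm
      · intro A hA 𝒲 h𝒲
        exact h𝒲.2 hA
      · intro A hA
        by_contra hA𝒦
        have hA𝒰 : (⟨(A : Set X)ᶜ, A.2.isOpen_compl⟩ : TopologicalSpace.Opens X) ∈ 𝒰 :=
          not_not.mp hA𝒦
        have h1 : A ∈ {C : TopologicalSpace.Closeds X |
            ((C : Set X) ∩ (A : Set X)ᶜ).Nonempty} :=
          hA _ ⟨isOpen_dia A.2.isOpen_compl, fun B hB => h𝒦sub _ hA𝒰 B hB⟩
        obtain ⟨x, hx1, hx2⟩ := h1
        exact hx2 hx1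
    have hmeetU : ∀ A ∈ 𝒦, ((U : Set X) ∩ (A : Set X)).Nonempty := by
      intro A hA
      obtain ⟨x, hx1, hx2⟩ := h𝒦sub U hU A hA
      exact ⟨x, hx2, hx1⟩
    obtain ⟨K, hKc, hKsat, hKU, hKmeet⟩ := hKC 𝒦 hcomp hsat (U : Set X) U.2 hmeetU
    refine ⟨K, hKc, hKsat, hKU, ?_⟩
    intro V hKV
    by_contra hV𝒰
    have hA𝒦 : (⟨(V : Set X)ᶜ, V.2.isClosed_compl⟩ : TopologicalSpace.Closeds X) ∈ 𝒦 := by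
      intro hmem
      apply hV𝒰
      have heq : (⟨(V : Set X)ᶜᶜ, V.2.isClosed_compl.isOpen_compl⟩ :
          TopologicalSpace.Opens X) = V := SetLike.coe_injective (compl_compl _)
      rw [← heq]
      exact hmem
    obtain ⟨x, hx1, hx2⟩ := hKmeet _ hA𝒦
    exact hx2 (hKV hx1)
end

section
/- Let L be a well-filtered dcpo such that (i) the Scott topology on Q(L) is contained in the upper Vietoris topology, and (ii) L has property (KC). Then the maps φ : H(Q(L)) → Q(H(L)) and ψ : Q(H(L)) → H(Q(L)) given by φ(𝒜) = { A ∈ H(L) : ∀K ∈ 𝒜, A ∩ K ≠ ∅ } and ψ(𝒦) = { K ∈ Q(L) : ∀A ∈ 𝒦, K ∩ A ≠ ∅ } are mutually inverse order isomorphisms. -/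
universe u

/-- The map φ : H(Q(L)) → Q(H(L)) on underlying subsets. -/
def phiMap {L : Type u} [Preorder L] (𝒜 : Set (QPoset L)) : Set (HPoset L) :=
  {A : HPoset L | ∀ K ∈ 𝒜, (A.carrier ∩ K.carrier).Nonempty}

/-- The map ψ : Q(H(L)) → H(Q(L)) on underlying subsets. -/
def psiMap {L : Type u} [Preorder L] (𝒦 : Set (HPoset L)) : Set (QPoset L) :=
  {K : QPoset L | ∀ A ∈ 𝒦, (K.carrier ∩ A.carrier).Nonempty}


lemma scottOpen_compl_aux {α : Type u} [Preorder α] {C : Set α}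
    (h : ScottClosed C) : ScottOpen Cᶜ := by
  refine ⟨h.1.compl, ?_⟩
  intro d hdne hdir a hlub ha
  by_contra hne
  rw [Set.not_nonempty_iff_eq_empty] at hne
  have hsub : d ⊆ C := fun x hx => by
    by_contra hc
    exact Set.eq_empty_iff_forall_notMem.mp hne x ⟨hx, hc⟩
  exact ha (h.2 d hsub hdne hdir a hlub)

lemma scottClosed_compl_aux {α : Type u} [Preorder α] {U : Set α}
    (h : ScottOpen U) : ScottClosed Uᶜ := by
  refine ⟨h.1.compl, ?_⟩
  intro d hd hne hdir a hlub
  intro ha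
  obtain ⟨x, hxd, hxU⟩ := h.2 d hne hdir a hlub ha
  exact hd hxd hxU

theorem phi_psi_iso_of_KC {L : Type u} [PartialOrder L] (hd : IsDcpo L)
    (hw : WellFiltered L)
    (hUV : ∀ 𝒰 : Set (QPoset L), ScottOpen 𝒰 → ∀ K ∈ 𝒰, ∃ U : Set L, ScottOpen U ∧
      K.carrier ⊆ U ∧ {K' : QPoset L | K'.carrier ⊆ U} ⊆ 𝒰)
    (hKC : ∀ 𝒦 : Set (HPoset L), ScottCompact 𝒦 → IsUpperSet 𝒦 →
      ∀ U : Set L, ScottOpen U → (∀ A ∈ 𝒦, (U ∩ A.carrier).Nonempty) →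
      ∃ K : Set L, ScottCompact K ∧ IsUpperSet K ∧ K ⊆ U ∧
        ∀ A ∈ 𝒦, (K ∩ A.carrier).Nonempty) :
    (∀ 𝒜 : Set (QPoset L), ScottClosed 𝒜 → psiMap (phiMap 𝒜) = 𝒜) ∧
    (∀ 𝒦 : Set (HPoset L), 𝒦.Nonempty → ScottCompact 𝒦 → IsUpperSet 𝒦 →
      phiMap (psiMap 𝒦) = 𝒦) ∧
    (∀ 𝒜 𝒜' : Set (QPoset L), ScottClosed 𝒜 → ScottClosed 𝒜' →
      (𝒜 ⊆ 𝒜' ↔ phiMap 𝒜' ⊆ phiMap 𝒜)) := by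
  have h1 : ∀ 𝒜 : Set (QPoset L), ScottClosed 𝒜 → psiMap (phiMap 𝒜) = 𝒜 := by
    intro 𝒜 h𝒜
    apply subset_antisymm
    · intro K hK
      by_contra hKA
      obtain ⟨U, hU, hKU, hbox⟩ := hUV 𝒜ᶜ (scottOpen_compl_aux h𝒜) K hKA
      have hUc : ScottClosed Uᶜ := scottClosed_compl_aux hU
      have hA : (⟨Uᶜ, hUc⟩ : HPoset L) ∈ phiMap 𝒜 := by
        intro K' hK'
        by_contra hne
        rw [Set.not_nonempty_iff_eq_empty] at hne
        have : K'.carrier ⊆ U := fun x hx => by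
          by_contra hc
          exact Set.eq_empty_iff_forall_notMem.mp hne x ⟨hc, hx⟩
        exact hbox this hK'
      obtain ⟨x, hxK, hxU⟩ := hK _ hA
      exact hxU (hKU hxK)
    · intro K hK A hA
      obtain ⟨x, hx1, hx2⟩ := hA K hK
      exact ⟨x, hx2, hx1⟩
  refine ⟨h1, ?_, ?_⟩
  · intro 𝒦 hne h𝒦 hup
    apply subset_antisymm
    · intro A hA
      by_contra hAK
      have hopen : ScottOpen A.carrierᶜ := scottOpen_compl_aux A.closed'
      have hmeet : ∀ A' ∈ 𝒦, (A.carrierᶜ ∩ A'.carrier).Nonempty := by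
        intro A' hA'
        by_contra hn
        rw [Set.not_nonempty_iff_eq_empty] at hn
        have : A'.carrier ⊆ A.carrier := fun x hx => by
          by_contra hc
          exact Set.eq_empty_iff_forall_notMem.mp hn x ⟨hc, hx⟩
        exact hAK (hup this hA')
      obtain ⟨K, hKc, hKu, hKsub, hKmeet⟩ := hKC 𝒦 h𝒦 hup _ hopen hmeet
      obtain ⟨A0, hA0⟩ := hne
      have hKne : K.Nonempty := ((hKmeet A0 hA0).mono (Set.inter_subset_left))
      have hKpsi : (⟨K, hKne, hKc, hKu⟩ : QPoset L) ∈ psiMap 𝒦 :=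
        fun A' hA' => hKmeet A' hA'
      obtain ⟨x, hxA, hxK⟩ := hA _ hKpsi
      exact hKsub hxK hxA
    · intro A hA K hK
      obtain ⟨x, hx1, hx2⟩ := hK A hA
      exact ⟨x, hx2, hx1⟩
  · intro 𝒜 𝒜' h𝒜 h𝒜'
    constructor
    · intro hsub A hA K hK
      exact hA K (hsub hK)
    · intro hphi
      rw [← h1 𝒜 h𝒜, ← h1 𝒜' h𝒜']
      intro K hK A hA
      exact hK A (hphi hA)
end

section
/- Let L be a well-filtered dcpo such that φ : H(Q(L)) → Q(H(L)) and ψ : Q(H(L)) → H(Q(L)) are mutually inverse isomorphisms. Then L has property (KC): for every Scott compact saturated subset 𝒦 of Γ(L) and every Scott open U meeting all members of 𝒦, there exists a compact saturated K ⊆ U meeting all members of 𝒦. -/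
universe u

theorem iso_implies_KC {L : Type u} [PartialOrder L]
    (hd : IsDcpo L) (hw : WellFiltered L)
    (h1 : ∀ 𝒜 : Set (QPoset L), ScottClosed 𝒜 → psiMap (phiMap 𝒜) = 𝒜)
    (h2 : ∀ 𝒦 : Set (HPoset L), 𝒦.Nonempty → ScottCompact 𝒦 → IsUpperSet 𝒦 →
      phiMap (psiMap 𝒦) = 𝒦) :
    ∀ 𝒦 : Set (HPoset L), ScottCompact 𝒦 → IsUpperSet 𝒦 →
      ∀ U : Set L, ScottOpen U → (∀ A ∈ 𝒦, (U ∩ A.carrier).Nonempty) →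
      ∃ K : Set L, ScottCompact K ∧ IsUpperSet K ∧ K ⊆ U ∧
        ∀ A ∈ 𝒦, (K ∩ A.carrier).Nonempty := by
  intro 𝒦 hKc hKu U hU hmeet
  rcases 𝒦.eq_empty_or_nonempty with hemp | hne
  · refine ⟨∅, ?_, ?_, ?_, ?_⟩
    · intro 𝒰 _ _
      exact ⟨∅, Set.empty_subset _, Set.finite_empty, by simp⟩
    · intro a b _ h; exact h
    · exact Set.empty_subset _
    · intro A hA; rw [hemp] at hA; exact absurd hA (Set.notMem_empty A)
  · -- complement of U is Scott closed
    have hUc : ScottClosed Uᶜ := by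
      constructor
      · intro a b hba hb hbU
        exact hb (hU.1 hba hbU)
      · intro d hd hdne hdd a ha haU
        rcases hU.2 d hdne hdd a ha haU with ⟨x, hxd, hxU⟩
        exact hd hxd hxU
    set Ac : HPoset L := ⟨Uᶜ, hUc⟩
    have hAcnot : Ac ∉ 𝒦 := by
      intro h
      rcases hmeet Ac h with ⟨x, hxU, hxc⟩
      exact hxc hxU
    rw [← h2 𝒦 hne hKc hKu] at hAcnot
    simp only [phiMap, Set.mem_setOf_eq, not_forall] at hAcnot
    rcases hAcnot with ⟨K₀, hK₀, hK₀empty⟩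
    refine ⟨K₀.carrier, K₀.compact', K₀.upper', ?_, ?_⟩
    · intro x hx
      by_contra hxU
      exact hK₀empty ⟨x, hxU, hx⟩
    · intro A hA
      rcases hK₀ A hA with ⟨x, hx, hxa⟩
      exact ⟨x, hx, hxa⟩
end

section
/- Let (M, α) be a Q-algebra in the category of well-filtered dcpos, where Q is the Smyth power monad with unit θ_M(x) = ↑x. Then every nonempty Scott compact saturated subset K of M has an infimum in M, and α(K) = inf K. -/
universe u

/-- An Eilenberg-Moore algebra of the Smyth power monad `Q`. -/
structure QAlgebra (M : Type u) [PartialOrder M] where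
  map : QPoset M → M
  cont : ScottContinuous map
  unit : ∀ (x : M) (K : QPoset M), K.carrier = Set.Ici x → map K = x
  assoc : ∀ (𝒦 : QPoset (QPoset M)) (K K' : QPoset M),
    K.carrier = ⋃ J ∈ 𝒦.carrier, J.carrier →
    K'.carrier = {y : M | ∃ J ∈ 𝒦.carrier, map J ≤ y} →
    map K = map K'


lemma ici_scottCompact {α : Type u} [Preorder α] (x : α) : ScottCompact (Set.Ici x) := by
  intro 𝒰 hU hcov
  obtain ⟨U, hU𝒰, hxU⟩ := hcov (Set.mem_Ici.mpr le_rfl)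
  exact ⟨{U}, by simpa using hU𝒰, Set.finite_singleton U,
    fun y hy => ⟨U, rfl, (hU U hU𝒰).1 hy hxU⟩⟩

def principalQ {α : Type u} [Preorder α] (x : α) : QPoset α :=
  ⟨Set.Ici x, ⟨x, le_rfl⟩, ici_scottCompact x, isUpperSet_Ici x⟩

theorem qAlgebra_map_isGLB {M : Type u} [PartialOrder M] (hd : IsDcpo M)
    (hw : WellFiltered M) (a : QAlgebra M) :
    ∀ K : QPoset M, IsGLB K.carrier (a.map K) := by
  intro K
  have hmono : Monotone a.map := a.cont.monotone
  constructor
  · intro x hx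
    have hle : K ≤ principalQ x := fun y hy => K.upper' hy hx
    calc a.map K ≤ a.map (principalQ x) := hmono hle
      _ = x := a.unit x (principalQ x) rfl
  · intro y hy
    have hle : principalQ y ≤ K := fun z hz => hy hz
    calc y = a.map (principalQ y) := (a.unit y (principalQ y) rfl).symm
      _ ≤ a.map K := hmono hle
end

section
/- Every Q-algebra homomorphism between Q-algebras over well-filtered dcpos preserves binary infima: if h : (L, α_L) → (M, α_M) satisfies h ∘ α_L = α_M ∘ Q(h), then h(x ∧ y) = h(x) ∧ h(y) for all x, y (these infima exist by the Q-algebra structure). -/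
universe u

/-- Auxiliary: the upper set of a single point as a `QPoset`. -/
def upOne {α : Type u} [PartialOrder α] (a : α) : QPoset α where
  carrier := Set.Ici a
  nonempty' := ⟨a, le_refl a⟩
  compact' := by
    intro 𝒰 hU hcov
    obtain ⟨U, hU𝒰, haU⟩ := hcov (Set.mem_Ici.2 (le_refl a))
    exact ⟨{U}, by simpa using hU𝒰, Set.finite_singleton U,
      fun z hz => ⟨U, rfl, (hU U hU𝒰).1 hz haU⟩⟩
  upper' := fun _ _ hxy hx => le_trans hx hxy

/-- Auxiliary: the upper set of a pair as a `QPoset`. -/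
def upPair {α : Type u} [PartialOrder α] (a b : α) : QPoset α where
  carrier := Set.Ici a ∪ Set.Ici b
  nonempty' := ⟨a, Or.inl (le_refl a)⟩
  compact' := by
    intro 𝒰 hU hcov
    obtain ⟨U, hU𝒰, haU⟩ := hcov (Or.inl (Set.mem_Ici.2 (le_refl a)))
    obtain ⟨V, hV𝒰, hbV⟩ := hcov (Or.inr (Set.mem_Ici.2 (le_refl b)))
    refine ⟨{U, V}, ?_, (Set.finite_singleton V).insert U, ?_⟩
    · intro W hW; rcases hW with rfl | rfl
      · exact hU𝒰
      · exact hV𝒰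
    · rintro z (hz | hz)
      · exact ⟨U, Or.inl rfl, (hU U hU𝒰).1 hz haU⟩
      · exact ⟨V, Or.inr rfl, (hU V hV𝒰).1 hz hbV⟩
  upper' := by
    rintro x y hxy (hx | hx)
    · exact Or.inl (le_trans hx hxy)
    · exact Or.inr (le_trans hx hxy)

lemma qmap_upPair_isGLB {α : Type u} [PartialOrder α] (A : QAlgebra α) (a b : α) :
    IsGLB {a, b} (A.map (upPair a b)) := by
  have hmono : Monotone A.map := A.cont.monotone
  have hone : ∀ c : α, A.map (upOne c) = c := fun c => A.unit c (upOne c) rfl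
  constructor
  · rintro z (rfl | rfl)
    · have hle : upPair z b ≤ upOne z := fun w hw => Or.inl hw
      calc A.map (upPair z b) ≤ A.map (upOne z) := hmono hle
        _ = z := hone z
    · have hle : upPair a z ≤ upOne z := fun w hw => Or.inr hw
      calc A.map (upPair a z) ≤ A.map (upOne z) := hmono hle
        _ = z := hone z
  · intro c hc
    have hca : c ≤ a := hc (Or.inl rfl)
    have hcb : c ≤ b := hc (Or.inr rfl)
    have hle : upOne c ≤ upPair a b := by
      rintro w (hw | hw)
      · exact le_trans hca hw
      · exact le_trans hcb hw
    calc c = A.map (upOne c) := (hone c).symm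
      _ ≤ A.map (upPair a b) := hmono hle

theorem qAlgebra_hom_preserves_binary_infs {L M : Type u} [PartialOrder L]
    [PartialOrder M] (hdL : IsDcpo L) (hwL : WellFiltered L)
    (hdM : IsDcpo M) (hwM : WellFiltered M)
    (aL : QAlgebra L) (aM : QAlgebra M) (h : L → M) (hcont : ScottContinuous h)
    (hhom : ∀ (K : QPoset L) (K' : QPoset M),
      K'.carrier = {y : M | ∃ x ∈ K.carrier, h x ≤ y} → h (aL.map K) = aM.map K') :
    ∀ (x y m : L), IsGLB {x, y} m → IsGLB {h x, h y} (h m) := by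
  intro x y m hm
  have hmeq : aL.map (upPair x y) = m :=
    (qmap_upPair_isGLB aL x y).unique hm
  have hset : (upPair (h x) (h y)).carrier =
      {z : M | ∃ w ∈ (upPair x y).carrier, h w ≤ z} := by
    ext z
    constructor
    · rintro (hz | hz)
      · exact ⟨x, Or.inl (le_refl x), hz⟩
      · exact ⟨y, Or.inr (le_refl y), hz⟩
    · rintro ⟨w, hw | hw, hwz⟩
      · exact Or.inl (le_trans (hcont.monotone hw) hwz)
      · exact Or.inr (le_trans (hcont.monotone hw) hwz)
  have key := hhom (upPair x y) (upPair (h x) (h y)) hset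
  rw [hmeq] at key
  rw [key]
  exact qmap_upPair_isGLB aM (h x) (h y)
end

section
/- Let 𝓛 be the poset of all nonempty co-countable subsets of [0,1] ordered by inclusion. Then 𝓛 is a dcpo in which every nonempty finite subset has a supremum (given by union), but the compact saturated subset K = { [0,1]∖{x} : x ∈ [0,1/2] } of Σ𝓛 has no infimum in 𝓛. -/
universe u

/-- Schalk's example: nonempty co-countable subsets of `[0,1]`, ordered by inclusion. -/
abbrev SchalkL : Type :=
  {A : Set unitInterval // A.Nonempty ∧ (Aᶜ).Countable}

/-- The (saturation of the) family `{ [0,1] ∖ {x} : x ∈ [0,1/2] }`. -/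
def SchalkK : Set SchalkL :=
  {B : SchalkL | ∃ x : unitInterval, (x : ℝ) ≤ 1 / 2 ∧ ({x}ᶜ : Set unitInterval) ⊆ B.1}

section SchalkAux

open Set

lemma not_countable_Icc_real {a b : ℝ} (h : a < b) : ¬ (Set.Icc a b).Countable := by
  intro hc
  have := hc.to_subtype
  have h1 : Cardinal.mk (Set.Icc a b) ≤ Cardinal.aleph0 := Cardinal.mk_le_aleph0
  rw [Cardinal.mk_Icc_real h] at h1
  exact absurd h1 (not_le.mpr Cardinal.aleph0_lt_continuum)

lemma schalk_univ_not_countable : ¬ (Set.univ : Set unitInterval).Countable := by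
  intro h
  exact not_countable_Icc_real one_pos ((Set.countable_univ_iff.mp h).to_set)

lemma schalk_diff_nonempty {A : Set unitInterval} (hA : (Aᶜ).Countable)
    {T : Set unitInterval} (hT : T.Countable) : (A \ T).Nonempty := by
  by_contra h
  rw [Set.not_nonempty_iff_eq_empty, Set.diff_eq_empty] at h
  apply schalk_univ_not_countable
  refine (hT.union hA).mono fun x _ => ?_
  by_cases hx : x ∈ A
  · exact Or.inl (h hx)
  · exact Or.inr hx

/-- Supremum (union) of any nonempty family in `SchalkL`. -/
lemma schalk_sup (S : Set SchalkL) (hS : S.Nonempty) :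
    ∃ z : SchalkL, z.1 = (⋃ A ∈ S, A.1) ∧ IsLUB S z := by
  classical
  obtain ⟨A, hA⟩ := hS
  refine ⟨⟨⋃ B ∈ S, B.1, ?_, ?_⟩, rfl, ?_, ?_⟩
  · exact A.2.1.mono (Set.subset_biUnion_of_mem hA)
  · exact A.2.2.mono (Set.compl_subset_compl.mpr (Set.subset_biUnion_of_mem hA))
  · intro B hB
    exact (Set.subset_biUnion_of_mem hB : B.1 ⊆ _)
  · intro z hz
    show (⋃ B ∈ S, B.1) ⊆ z.1
    exact Set.iUnion₂_subset fun B hB => hz hB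

/-- The co-singleton `[0,1] ∖ {x}` as an element of `SchalkL`. -/
noncomputable def schalkCoS (x : unitInterval) : SchalkL :=
  ⟨({x}ᶜ : Set unitInterval),
    (by obtain ⟨y, hy⟩ := exists_ne x; exact ⟨y, hy⟩),
    (by rw [compl_compl]; exact Set.countable_singleton x)⟩

lemma schalkCoS_mem_K {x : unitInterval} (hx : (x : ℝ) ≤ 1 / 2) :
    schalkCoS x ∈ SchalkK := ⟨x, hx, subset_rfl⟩

/-- In a Scott open set `U` containing some point, all but finitely many
co-singletons belong to `U`. -/
lemma schalk_bad_finite {U : Set SchalkL} (hU : ScottOpen U) {A : SchalkL} (hA : A ∈ U) :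
    {x : unitInterval | schalkCoS x ∉ U}.Finite := by
  classical
  by_contra hinf
  have hinf' : {x : unitInterval | schalkCoS x ∉ U}.Infinite := hinf
  have := hinf'.to_subtype
  let f : ℕ ↪ {x : unitInterval | schalkCoS x ∉ U} := Infinite.natEmbedding _
  set T : ℕ → Set unitInterval := fun m => (fun n => ((f n : _) : unitInterval)) '' (Set.Ici m)
    with hT
  have hTc : ∀ m, (T m).Countable := fun m =>
    (Set.countable_range fun n => ((f n : _) : unitInterval)).mono (Set.image_subset_range _ _)
  have hcompl : ∀ m, ((A.1 \ T m)ᶜ).Countable := by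
    intro m
    refine (A.2.2.union (hTc m)).mono fun x hx => ?_
    by_cases hxA : x ∈ A.1
    · exact Or.inr (by_contra fun hxT => hx ⟨hxA, hxT⟩)
    · exact Or.inl hxA
  set dm : ℕ → SchalkL := fun m =>
    ⟨A.1 \ T m, schalk_diff_nonempty A.2.2 (hTc m), hcompl m⟩ with hdm
  have hmono : ∀ {m m' : ℕ}, m ≤ m' → dm m ≤ dm m' := by
    intro m m' h
    show A.1 \ T m ⊆ A.1 \ T m'
    refine Set.diff_subset_diff_right ?_
    exact Set.image_mono (Set.Ici_subset_Ici.mpr h)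
  have hdir : DirectedOn (· ≤ ·) (Set.range dm) := by
    rintro _ ⟨m, rfl⟩ _ ⟨m', rfl⟩
    exact ⟨dm (max m m'), Set.mem_range_self _, hmono (le_max_left _ _),
      hmono (le_max_right _ _)⟩
  have hlub : IsLUB (Set.range dm) A := by
    constructor
    · rintro _ ⟨m, rfl⟩
      exact (Set.diff_subset : A.1 \ T m ⊆ A.1)
    · intro z hz
      show A.1 ⊆ z.1
      intro a ha
      by_cases hr : ∃ n, ((f n : _) : unitInterval) = a
      · obtain ⟨n, hn⟩ := hr
        have hmem : a ∈ (dm (n + 1)).1 := by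
          refine ⟨ha, ?_⟩
          rintro ⟨k, hk, hfk⟩
          have hkn : k = n := f.injective (Subtype.ext (hfk.trans hn.symm))
          rw [Set.mem_Ici] at hk
          omega
        exact hz (Set.mem_range_self (n + 1)) hmem
      · have hmem : a ∈ (dm 0).1 := by
          refine ⟨ha, ?_⟩
          rintro ⟨k, _, hfk⟩
          exact hr ⟨k, hfk⟩
        exact hz (Set.mem_range_self 0) hmem
  obtain ⟨_, ⟨m, rfl⟩, hdU⟩ :=
    hU.2 (Set.range dm) ⟨dm 0, Set.mem_range_self 0⟩ hdir A hlub hA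
  have hle : dm m ≤ schalkCoS (f m) := by
    show A.1 \ T m ⊆ ({((f m : _) : unitInterval)}ᶜ : Set unitInterval)
    intro a ha
    simp only [Set.mem_compl_iff, Set.mem_singleton_iff]
    rintro rfl
    exact ha.2 ⟨m, le_refl m, rfl⟩
  exact (f m).2 (hU.1 hle hdU)

lemma schalk_half_not_countable :
    ¬ ({x : unitInterval | (x : ℝ) ≤ 1 / 2}).Countable := by
  intro h
  have hc : Countable ({x : unitInterval | (x : ℝ) ≤ 1 / 2}) := h.to_subtype
  have hj : Function.Injective
      (fun r : Set.Icc (0 : ℝ) (1 / 2) =>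
        (⟨⟨r.1, r.2.1, le_trans r.2.2 (by norm_num)⟩, r.2.2⟩ :
          {x : unitInterval | (x : ℝ) ≤ 1 / 2})) := by
    intro a b hab
    apply Subtype.ext
    exact congrArg (fun z => ((z.1 : unitInterval) : ℝ)) hab
  have := hj.countable
  exact not_countable_Icc_real (by norm_num : (0:ℝ) < 1 / 2)
    (Set.countable_coe_iff.mp this)

end SchalkAux

theorem schalk_counterexample :
    IsDcpo SchalkL ∧
    (∀ S : Set SchalkL, S.Finite → S.Nonempty →
      ∃ z : SchalkL, z.1 = (⋃ A ∈ S, A.1) ∧ IsLUB S z) ∧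
    ScottCompact SchalkK ∧ IsUpperSet SchalkK ∧
    ¬ ∃ m : SchalkL, IsGLB SchalkK m := by
  classical
  refine ⟨?_, ?_, ?_, ?_, ?_⟩
  · intro d hne _
    obtain ⟨z, _, hz⟩ := schalk_sup d hne
    exact ⟨z, hz⟩
  · intro S _ hS
    exact schalk_sup S hS
  · intro 𝒰 hop hcov
    have h0K : schalkCoS 0 ∈ SchalkK := schalkCoS_mem_K (by norm_num)
    obtain ⟨U₀, hU₀𝒰, h0U₀⟩ := hcov h0K
    have hfin := schalk_bad_finite (hop U₀ hU₀𝒰) h0U₀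
    have hch : ∀ x : unitInterval, ∃ V : Set SchalkL,
        (x : ℝ) ≤ 1 / 2 → V ∈ 𝒰 ∧ schalkCoS x ∈ V := by
      intro x
      by_cases h : (x : ℝ) ≤ 1 / 2
      · obtain ⟨V, hV, hxV⟩ := hcov (schalkCoS_mem_K h)
        exact ⟨V, fun _ => ⟨hV, hxV⟩⟩
      · exact ⟨U₀, fun hh => absurd hh h⟩
    choose g hg using hch
    refine ⟨insert U₀ (g '' ({x | schalkCoS x ∉ U₀} ∩ {x | (x : ℝ) ≤ 1 / 2})),
      ?_, ?_, ?_⟩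
    · rintro V (rfl | ⟨x, ⟨_, hx2⟩, rfl⟩)
      · exact hU₀𝒰
      · exact (hg x hx2).1
    · exact ((hfin.inter_of_left _).image g).insert U₀
    · rintro B ⟨x, hx, hsub⟩
      have hle : schalkCoS x ≤ B := hsub
      by_cases h : schalkCoS x ∈ U₀
      · exact ⟨U₀, Set.mem_insert _ _, (hop U₀ hU₀𝒰).1 hle h⟩
      · refine ⟨g x, Set.mem_insert_of_mem _ (Set.mem_image_of_mem g ⟨h, hx⟩), ?_⟩
        exact (hop (g x) (hg x hx).1).1 hle (hg x hx).2
  · rintro a b hab ⟨x, hx, hsub⟩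
    exact ⟨x, hx, hsub.trans hab⟩
  · rintro ⟨m, hm⟩
    apply schalk_half_not_countable
    refine m.2.2.mono ?_
    intro x hx
    have hle : m ≤ schalkCoS x := hm.1 (schalkCoS_mem_K hx)
    intro hxm
    exact (hle hxm) rfl
end
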